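/- (Singleton-alphabet case.) Let Γ be a type with exactly one element, let k : ℕ, and let S be a list over Γ with |S| ≥ k. Then the Levenshtein ball 𝒮_k(S,Γ) = {S' : List Γ | d_lev(S, S') ≤ k} has exactly 2k + 1 elements. -/

import Mathlib

/-- Costs of edit operations (as in the former `Mathlib.Data.List.EditDistance.Defs`). -/
structure Levenshtein.Cost (α β δ : Type*) where
  delete : α → δ
  insert : β → δ
  substitute : α → β → δ

/-- The default unit cost (as in the former Mathlib). -/
def Levenshtein.defaultCost {α : Type*} [DecidableEq α] : Levenshtein.Cost α α ℕ where
  delete _ := 1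
  insert _ := 1
  substitute a b := if a = b then 0 else 1

/-- The Levenshtein distance for a cost function, by the defining recursion of the former
Mathlib `levenshtein` (its lemmas `levenshtein_nil_nil`, `levenshtein_nil_cons`,
`levenshtein_cons_nil`, `levenshtein_cons_cons`). -/
def levenshtein {α β δ : Type*} [AddZeroClass δ] [Min δ] (C : Levenshtein.Cost α β δ) :
    List α → List β → δ
  | [], [] => 0
  | [], y :: ys => C.insert y + levenshtein C [] ys
  | x :: xs, [] => C.delete x + levenshtein C xs []
  | x :: xs, y :: ys =>
    min (C.delete x + levenshtein C xs (y :: ys))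
      (min (C.insert y + levenshtein C (x :: xs) ys) (C.substitute x y + levenshtein C xs ys))

/-- The Levenshtein (edit) distance with unit costs. -/
def dlev {Γ : Type*} [DecidableEq Γ] (S S' : List Γ) : ℕ :=
  levenshtein Levenshtein.defaultCost S S'

@[simp] lemma levenshtein_nil_nil {α β δ : Type*} [AddZeroClass δ] [Min δ]
    (C : Levenshtein.Cost α β δ) : levenshtein C [] [] = 0 := by
  rw [levenshtein]

lemma levenshtein_nil_cons {α β δ : Type*} [AddZeroClass δ] [Min δ]
    (C : Levenshtein.Cost α β δ) (y : β) (ys : List β) :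
    levenshtein C [] (y :: ys) = C.insert y + levenshtein C [] ys := by
  rw [levenshtein]

lemma levenshtein_cons_nil {α β δ : Type*} [AddZeroClass δ] [Min δ]
    (C : Levenshtein.Cost α β δ) (x : α) (xs : List α) :
    levenshtein C (x :: xs) [] = C.delete x + levenshtein C xs [] := by
  rw [levenshtein]

lemma levenshtein_cons_cons {α β δ : Type*} [AddZeroClass δ] [Min δ]
    (C : Levenshtein.Cost α β δ) (x : α) (xs : List α) (y : β) (ys : List β) :
    levenshtein C (x :: xs) (y :: ys) =
      min (C.delete x + levenshtein C xs (y :: ys))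
        (min (C.insert y + levenshtein C (x :: xs) ys) (C.substitute x y + levenshtein C xs ys)) := by
  rw [levenshtein]

lemma dlev_replicate {Γ : Type*} [DecidableEq Γ] (c : Γ) (m n : ℕ) :
    dlev (List.replicate m c) (List.replicate n c) = Nat.dist m n := by
  have hdel : (Levenshtein.defaultCost : Levenshtein.Cost Γ Γ ℕ).delete c = 1 := rfl
  have hins : (Levenshtein.defaultCost : Levenshtein.Cost Γ Γ ℕ).insert c = 1 := rfl
  have hsub : (Levenshtein.defaultCost : Levenshtein.Cost Γ Γ ℕ).substitute c c = 0 := by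
    simp [Levenshtein.defaultCost]
  induction m generalizing n with
  | zero =>
    induction n with
    | zero => simp [dlev]
    | succ n ih =>
      simp only [dlev, List.replicate_succ, List.replicate_zero, levenshtein_nil_cons, hins] at ih ⊢
      rw [ih]; simp [Nat.dist]; omega
  | succ m ihm =>
    induction n with
    | zero =>
      have := ihm 0
      simp only [dlev, List.replicate_succ, List.replicate_zero, levenshtein_cons_nil,
        hdel] at this ⊢
      rw [this]; simp [Nat.dist]; omega
    | succ n ihn =>
      have h1 := ihm (n+1)
      have h3 := ihm n
      simp only [dlev, List.replicate_succ] at h1 ihn h3 ⊢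
      rw [levenshtein_cons_cons, hdel, hins, hsub, h1, ihn, h3]
      simp [Nat.dist]; omega

/-- Singleton-alphabet case: the Levenshtein ball of radius `k` around a sentence of
length at least `k` has exactly `2 * k + 1` elements. -/
theorem ncard_ball_singleton_alphabet {Γ : Type*} [DecidableEq Γ] [Fintype Γ]
    (hΓ : Fintype.card Γ = 1) (k : ℕ) (S : List Γ) (hS : k ≤ S.length) :
    Set.ncard {S' : List Γ | dlev S S' ≤ k} = 2 * k + 1 := by
  obtain ⟨c, hc⟩ := Fintype.card_eq_one_iff.mp hΓ
  have hrep : ∀ L : List Γ, L = List.replicate L.length c := by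
    intro L
    apply List.eq_replicate_of_mem
    intro x _; exact hc x
  have hset : {S' : List Γ | dlev S S' ≤ k} =
      (fun n => List.replicate n c) '' Set.Icc (S.length - k) (S.length + k) := by
    ext L
    simp only [Set.mem_setOf_eq, Set.mem_image, Set.mem_Icc]
    constructor
    · intro h
      refine ⟨L.length, ?_, (hrep L).symm⟩
      rw [hrep S, hrep L, dlev_replicate] at h
      simp [Nat.dist] at h
      omega
    · rintro ⟨n, ⟨h1, h2⟩, rfl⟩
      rw [hrep S, List.length_replicate] at *
      rw [dlev_replicate]
      simp [Nat.dist]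
      omega
  rw [hset, Set.ncard_image_of_injective _ (fun a b h => by simpa using congrArg List.length h)]
  rw [← Finset.coe_Icc, Set.ncard_coe_finset, Nat.card_Icc]
  omega
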